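/- Let n = dm with d | n, q a primitive n-th root of unity, and ξ ∈ k. The algebra K(d,ξ) generated by h, w with relations h^d = 1, hw = q^m wh, w^n = ξ·1 is a left comodule algebra over the Taft algebra T_q via the coaction determined by λ(h) = g^m ⊗ h and λ(w) = x ⊗ 1 + g ⊗ w; i.e. λ extends to a well-defined algebra map K(d,ξ) → T_q ⊗ K(d,ξ) satisfying the comodule axioms. -/

import Mathlib

open TensorProduct

noncomputable section

section QB
variable {k : Type*} [Field k]

/-- Gaussian binomial coefficients via the recursion `[N+1, i+1] = q^(i+1)[N, i+1] + [N, i]`. -/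
def qb (q : k) : ℕ → ℕ → k
  | 0, 0 => 1
  | 0, _+1 => 0
  | N+1, 0 => qb q N 0
  | N+1, i+1 => q^(i+1) * qb q N (i+1) + qb q N i

lemma qb_zero (q : k) (N : ℕ) : qb q N 0 = 1 := by
  induction N with
  | zero => rfl
  | succ N ih => rw [qb, ih]

lemma qb_gt (q : k) {N i : ℕ} (h : N < i) : qb q N i = 0 := by
  induction N generalizing i with
  | zero => cases i with
    | zero => omega
    | succ j => rfl
  | succ N ih =>
    cases i with
    | zero => omega
    | succ j => rw [qb, ih (by omega), ih (by omega)]; ring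

lemma qb_diag (q : k) (N : ℕ) : qb q N N = 1 := by
  induction N with
  | zero => rfl
  | succ N ih => rw [qb, ih, qb_gt q (by omega)]; ring

/-- `∏ (1 - q^(j+1))` for `j+1 = 1..t`. -/
def qF (q : k) (t : ℕ) : k := ∏ j ∈ Finset.range t, (1 - q^(j+1))

lemma qF_succ (q : k) (t : ℕ) : qF q (t+1) = qF q t * (1 - q^(t+1)) := by
  rw [qF, Finset.prod_range_succ]; rfl

lemma qb_key (q : k) (N : ℕ) : ∀ i ≤ N, qb q N i * qF q i * qF q (N - i) = qF q N := by
  induction N with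
  | zero =>
    intro i hi; interval_cases i; simp [qb_zero, qF]
  | succ N ih =>
    intro i hi
    cases i with
    | zero => simp [qb_zero, qF]
    | succ j =>
      rcases eq_or_lt_of_le hi with h | h
      · obtain rfl : j = N := by omega
        simp [qb_diag, qF]
      · have hj : j + 1 ≤ N := by omega
        have hs : N - j = (N - (j+1)) + 1 := by omega
        set s := N - (j+1) with hsdef
        have hIH1 := ih (j+1) hj
        have hIH2 := ih j (by omega)
        rw [hs] at hIH2
        rw [show N + 1 - (j+1) = s + 1 by omega]
        rw [qb, qF_succ, qF_succ, qF_succ]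
        rw [qF_succ] at hIH1 hIH2
        have hpow : q ^ (N + 1) = q ^ (j+1) * q ^ (s+1) := by
          rw [← pow_add]; congr 1; omega
        rw [hpow]
        linear_combination (q^(j+1) * (1 - q^(s+1))) * hIH1 + (1 - q^(j+1)) * hIH2

lemma qF_ne_zero {q : k} {n : ℕ} (hq : IsPrimitiveRoot q n) {t : ℕ} (ht : t < n) :
    qF q t ≠ 0 := by
  rw [qF]
  apply Finset.prod_ne_zero_iff.mpr
  intro j hj
  rw [Finset.mem_range] at hj
  have := hq.pow_ne_one_of_pos_of_lt (l := j+1) (by omega) (by omega)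
  intro h
  exact this (by linear_combination -h)

lemma qb_vanish {q : k} {n : ℕ} (hq : IsPrimitiveRoot q n) {i : ℕ} (h0 : 0 < i) (hn : i < n) :
    qb q n i = 0 := by
  have key := qb_key q n i (le_of_lt hn)
  have hzero : qF q n = 0 := by
    rw [qF]
    apply Finset.prod_eq_zero (Finset.mem_range.mpr (show n - 1 < n by omega))
    rw [show n - 1 + 1 = n by omega, hq.pow_eq_one]; ring
  rw [hzero] at key
  have h1 := qF_ne_zero hq hn
  have h2 := qF_ne_zero hq (show n - i < n by omega)
  rcases mul_eq_zero.mp key with h | h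
  · rcases mul_eq_zero.mp h with h | h
    · exact h
    · exact absurd h h1
  · exact absurd h h2

variable {R : Type*} [Ring R] [Algebra k R]

lemma q_mul_pow {q : k} {a b : R} (hab : a * b = q • (b * a)) (i : ℕ) :
    a * b ^ i = (q ^ i) • (b ^ i * a) := by
  induction i with
  | zero => simp
  | succ i ih =>
    rw [pow_succ', ← mul_assoc, hab, smul_mul_assoc, mul_assoc, ih, mul_smul_comm,
      ← smul_assoc, smul_eq_mul, ← pow_succ', pow_succ', mul_assoc]

lemma q_pow_mul {q : k} {a b : R} (hab : a * b = q • (b * a)) (t : ℕ) :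
    a ^ t * b = (q ^ t) • (b * a ^ t) := by
  induction t with
  | zero => simp
  | succ t ih =>
    rw [pow_succ, mul_assoc, hab, mul_smul_comm, ← mul_assoc, ih, smul_mul_assoc,
      smul_smul, ← pow_succ', mul_assoc]

lemma q_add_pow {q : k} {a b : R} (hab : a * b = q • (b * a)) (N : ℕ) :
    (b + a) ^ N = ∑ i ∈ Finset.range (N+1), qb q N i • (b ^ i * a ^ (N - i)) := by
  induction N with
  | zero => simp [qb_zero]
  | succ N ih =>
    rw [pow_succ', ih, add_mul, Finset.mul_sum, Finset.mul_sum]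
    have h1 : ∑ i ∈ Finset.range (N+1), b * qb q N i • (b ^ i * a ^ (N - i)) =
        ∑ i ∈ Finset.range (N+1), qb q N i • (b ^ (i+1) * a ^ (N + 1 - (i+1))) := by
      apply Finset.sum_congr rfl
      intro i hi
      rw [mul_smul_comm, ← mul_assoc, ← pow_succ', show N + 1 - (i+1) = N - i from by omega]
    have h2 : ∑ i ∈ Finset.range (N+1), a * qb q N i • (b ^ i * a ^ (N - i)) =
        ∑ i ∈ Finset.range (N+2), (q ^ i * qb q N i) • (b ^ i * a ^ (N + 1 - i)) := by
      rw [Finset.sum_range_succ (n := N+1), qb_gt q (by omega)]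
      simp only [mul_zero, zero_smul, add_zero]
      apply Finset.sum_congr rfl
      intro i hi
      rw [Finset.mem_range] at hi
      have hx : a * (b ^ i * a ^ (N - i)) = q ^ i • (b ^ i * a ^ (N + 1 - i)) := by
        rw [← mul_assoc, q_mul_pow hab, smul_mul_assoc, mul_assoc, ← pow_succ',
          show N - i + 1 = N + 1 - i by omega]
      rw [mul_smul_comm, hx, smul_smul, mul_comm (qb q N i) (q ^ i)]
    rw [h1, h2]
    rw [Finset.sum_range_succ' (fun i => qb q (N+1) i • (b ^ i * a ^ (N + 1 - i))) (N+1)]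
    rw [Finset.sum_range_succ' (fun i => (q ^ i * qb q N i) • (b ^ i * a ^ (N + 1 - i))) (N+1)]
    simp only [qb, qb_zero, pow_zero, one_mul, one_smul, add_smul]
    rw [Finset.sum_add_distrib]
    abel

lemma q_add_pow_prim {q : k} {n : ℕ} (hn : 0 < n) (hq : IsPrimitiveRoot q n)
    {a b : R} (hab : a * b = q • (b * a)) :
    (b + a) ^ n = b ^ n + a ^ n := by
  rw [q_add_pow hab n, Finset.sum_range_succ, qb_diag]
  have : ∑ i ∈ Finset.range n, qb q n i • (b ^ i * a ^ (n - i)) = a ^ n := by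
    rw [Finset.sum_eq_single_of_mem 0 (Finset.mem_range.mpr hn)]
    · simp [qb_zero]
    · intro i hi h0
      rw [Finset.mem_range] at hi
      rw [qb_vanish hq (by omega) hi, zero_smul]
  rw [this]
  simp [add_comm]

end QB

variable (k : Type*) [Field k] (n : ℕ) (q : k)

/-- The defining relations of the Taft algebra:
`gx = q·xg`, `gⁿ = 1`, `xⁿ = 0`. -/
inductive TaftRel : FreeAlgebra k (Fin 2) → FreeAlgebra k (Fin 2) → Prop
  | g_pow : TaftRel ((FreeAlgebra.ι k (0 : Fin 2)) ^ n) 1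
  | x_pow : TaftRel ((FreeAlgebra.ι k (1 : Fin 2)) ^ n) 0
  | gx : TaftRel (FreeAlgebra.ι k (0 : Fin 2) * FreeAlgebra.ι k (1 : Fin 2))
      (q • (FreeAlgebra.ι k (1 : Fin 2) * FreeAlgebra.ι k (0 : Fin 2)))

/-- The Taft algebra `T_q = k⟨g,x | gx = qxg, gⁿ = 1, xⁿ = 0⟩`. -/
def Taft := RingQuot (TaftRel k n q)

instance : Ring (Taft k n q) := by unfold Taft; infer_instance
instance : Algebra k (Taft k n q) := by unfold Taft; infer_instance

/-- The grouplike generator `g` of the Taft algebra. -/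
def TaftG : Taft k n q := RingQuot.mkAlgHom k (TaftRel k n q) (FreeAlgebra.ι k 0)

/-- The skew-primitive generator `x` of the Taft algebra. -/
def TaftX : Taft k n q := RingQuot.mkAlgHom k (TaftRel k n q) (FreeAlgebra.ι k 1)

variable (d m : ℕ) (ξ : k)

/-- The defining relations of `K(d,ξ)`: `h^d = 1`, `hw = q^m wh`, `wⁿ = ξ·1`. -/
inductive KRel : FreeAlgebra k (Fin 2) → FreeAlgebra k (Fin 2) → Prop
  | h_pow : KRel ((FreeAlgebra.ι k (0 : Fin 2)) ^ d) 1
  | hw : KRel (FreeAlgebra.ι k (0 : Fin 2) * FreeAlgebra.ι k (1 : Fin 2))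
      ((q ^ m) • (FreeAlgebra.ι k (1 : Fin 2) * FreeAlgebra.ι k (0 : Fin 2)))
  | w_pow : KRel ((FreeAlgebra.ι k (1 : Fin 2)) ^ n) (algebraMap k _ ξ)

/-- The comodule algebra `K(d,ξ)` over the Taft algebra. -/
def KAlg := RingQuot (KRel k n q d m ξ)

instance : Ring (KAlg k n q d m ξ) := by unfold KAlg; infer_instance
instance : Algebra k (KAlg k n q d m ξ) := by unfold KAlg; infer_instance

/-- The generator `h` of `K(d,ξ)`. -/
def KH : KAlg k n q d m ξ := RingQuot.mkAlgHom k (KRel k n q d m ξ) (FreeAlgebra.ι k 0)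

/-- The generator `w` of `K(d,ξ)`. -/
def KW : KAlg k n q d m ξ := RingQuot.mkAlgHom k (KRel k n q d m ξ) (FreeAlgebra.ι k 1)

-- ### auxiliary relation lemmas

lemma taft_g_pow : TaftG k n q ^ n = 1 := by
  have h := RingQuot.mkAlgHom_rel k (TaftRel.g_pow (k := k) (n := n) (q := q))
  rw [map_pow, map_one] at h
  exact h

lemma taft_x_pow : TaftX k n q ^ n = 0 := by
  have h := RingQuot.mkAlgHom_rel k (TaftRel.x_pow (k := k) (n := n) (q := q))
  rw [map_pow, map_zero] at h
  exact h

lemma taft_gx : TaftG k n q * TaftX k n q = q • (TaftX k n q * TaftG k n q) := by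
  have h := RingQuot.mkAlgHom_rel k (TaftRel.gx (k := k) (n := n) (q := q))
  rw [map_mul, map_smul, map_mul] at h
  exact h

lemma kh_pow : KH k n q d m ξ ^ d = 1 := by
  have h := RingQuot.mkAlgHom_rel k (KRel.h_pow (k := k) (n := n) (q := q) (d := d) (m := m) (ξ := ξ))
  rw [map_pow, map_one] at h
  exact h

lemma khw : KH k n q d m ξ * KW k n q d m ξ = (q ^ m) • (KW k n q d m ξ * KH k n q d m ξ) := by
  have h := RingQuot.mkAlgHom_rel k (KRel.hw (k := k) (n := n) (q := q) (d := d) (m := m) (ξ := ξ))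
  rw [map_mul, map_smul, map_mul] at h
  exact h

lemma kw_pow : KW k n q d m ξ ^ n = algebraMap k _ ξ := by
  have h := RingQuot.mkAlgHom_rel k (KRel.w_pow (k := k) (n := n) (q := q) (d := d) (m := m) (ξ := ξ))
  rw [map_pow, AlgHom.commutes] at h
  exact h

lemma tmul_mul_tmul_TK (a₁ a₂ : Taft k n q) (b₁ b₂ : KAlg k n q d m ξ) :
    a₁ ⊗ₜ[k] b₁ * a₂ ⊗ₜ[k] b₂ = (a₁ * a₂) ⊗ₜ[k] (b₁ * b₂) :=
  Algebra.TensorProduct.tmul_mul_tmul (R := k) (A := RingQuot (TaftRel k n q))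
    (B := RingQuot (KRel k n q d m ξ)) a₁ a₂ b₁ b₂

lemma one_def_TK : (1 : Taft k n q ⊗[k] KAlg k n q d m ξ) = 1 ⊗ₜ[k] 1 :=
  Algebra.TensorProduct.one_def (R := k) (A := RingQuot (TaftRel k n q))
    (B := RingQuot (KRel k n q d m ξ))

/-- The free lift of the coaction. -/
def coactF : FreeAlgebra k (Fin 2) →ₐ[k] Taft k n q ⊗[k] KAlg k n q d m ξ :=
  FreeAlgebra.lift k
    ![(TaftG k n q ^ m) ⊗ₜ[k] KH k n q d m ξ,
      TaftX k n q ⊗ₜ[k] 1 + TaftG k n q ⊗ₜ[k] KW k n q d m ξ]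

lemma coactF_zero : coactF k n q d m ξ (FreeAlgebra.ι k (0 : Fin 2)) =
    (TaftG k n q ^ m) ⊗ₜ[k] KH k n q d m ξ := by
  rw [coactF, FreeAlgebra.lift_ι_apply]
  rfl

lemma coactF_one : coactF k n q d m ξ (FreeAlgebra.ι k (1 : Fin 2)) =
    TaftX k n q ⊗ₜ[k] 1 + TaftG k n q ⊗ₜ[k] KW k n q d m ξ := by
  rw [coactF, FreeAlgebra.lift_ι_apply]
  rfl

lemma coactF_rel (hn : 0 < n) (hq : IsPrimitiveRoot q n) (hm : n = d * m) :
    ∀ ⦃x y : FreeAlgebra k (Fin 2)⦄, KRel k n q d m ξ x y →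
      coactF k n q d m ξ x = coactF k n q d m ξ y := by
  intro x y r
  induction r with
  | h_pow =>
    rw [map_pow, map_one, coactF_zero, Algebra.TensorProduct.tmul_pow, ← pow_mul,
      kh_pow, (mul_comm m d).trans hm.symm, taft_g_pow]
    rfl
  | hw =>
    rw [map_mul, map_smul, map_mul, coactF_zero, coactF_one]
    rw [mul_add, add_mul, smul_add]
    congr 1
    · rw [tmul_mul_tmul_TK, tmul_mul_tmul_TK,
        mul_one, one_mul, q_pow_mul (taft_gx k n q) m, TensorProduct.smul_tmul']
    · rw [tmul_mul_tmul_TK, tmul_mul_tmul_TK,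
        khw, TensorProduct.tmul_smul, ← pow_succ, ← pow_succ']
  | w_pow =>
    rw [map_pow, AlgHom.commutes, coactF_one]
    have hab : (TaftG k n q ⊗ₜ[k] KW k n q d m ξ) * (TaftX k n q ⊗ₜ[k] (1 : KAlg k n q d m ξ)) =
        q • ((TaftX k n q ⊗ₜ[k] (1 : KAlg k n q d m ξ)) * (TaftG k n q ⊗ₜ[k] KW k n q d m ξ)) := by
      rw [tmul_mul_tmul_TK, tmul_mul_tmul_TK,
        mul_one, one_mul, taft_gx, TensorProduct.smul_tmul']
    rw [q_add_pow_prim hn hq hab, Algebra.TensorProduct.tmul_pow,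
      Algebra.TensorProduct.tmul_pow, taft_x_pow, taft_g_pow, kw_pow,
      TensorProduct.zero_tmul, zero_add, Algebra.TensorProduct.algebraMap_apply,
      Algebra.algebraMap_eq_smul_one, Algebra.algebraMap_eq_smul_one]
    exact (TensorProduct.smul_tmul ξ 1 1).symm

lemma liftK_mk (hn : 0 < n) (hq : IsPrimitiveRoot q n) (hm : n = d * m)
    (x : FreeAlgebra k (Fin 2)) :
    (RingQuot.liftAlgHom k ⟨coactF k n q d m ξ, coactF_rel k n q d m ξ hn hq hm⟩ :
      KAlg k n q d m ξ →ₐ[k] Taft k n q ⊗[k] KAlg k n q d m ξ)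
      (RingQuot.mkAlgHom k (KRel k n q d m ξ) x) = coactF k n q d m ξ x :=
  RingQuot.liftAlgHom_mkAlgHom_apply k _ _ x

/-- Let `n = dm`, `q` a primitive `n`-th root of unity and `ξ ∈ k`.  The algebra
`K(d,ξ)` is a left comodule algebra over the Taft algebra `T_q` via the coaction
determined by `λ(h) = gᵐ ⊗ h` and `λ(w) = x ⊗ 1 + g ⊗ w`: the coaction extends to a
well-defined algebra map satisfying the comodule axioms. -/
theorem KAlg_comodule_algebra (hn : 0 < n) (hq : IsPrimitiveRoot q n)
    (hd : d ∣ n) (hm : n = d * m)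
    -- the Hopf-algebra structure maps of the Taft algebra
    (Δ : Taft k n q →ₐ[k] Taft k n q ⊗[k] Taft k n q) (ε : Taft k n q →ₐ[k] k)
    (hcoassoc : (TensorProduct.assoc k _ _ _).toLinearMap ∘ₗ
        LinearMap.rTensor (Taft k n q) Δ.toLinearMap ∘ₗ Δ.toLinearMap =
      LinearMap.lTensor (Taft k n q) Δ.toLinearMap ∘ₗ Δ.toLinearMap)
    (hcl : (TensorProduct.lid k (Taft k n q)).toLinearMap ∘ₗ
        LinearMap.rTensor (Taft k n q) ε.toLinearMap ∘ₗ Δ.toLinearMap = LinearMap.id)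
    (hcr : (TensorProduct.rid k (Taft k n q)).toLinearMap ∘ₗ
        LinearMap.lTensor (Taft k n q) ε.toLinearMap ∘ₗ Δ.toLinearMap = LinearMap.id)
    (hΔg : Δ (TaftG k n q) = TaftG k n q ⊗ₜ[k] TaftG k n q)
    (hΔx : Δ (TaftX k n q) = TaftX k n q ⊗ₜ[k] 1 + TaftG k n q ⊗ₜ[k] TaftX k n q)
    (hεg : ε (TaftG k n q) = 1) (hεx : ε (TaftX k n q) = 0) :
    ∃ lam : KAlg k n q d m ξ →ₐ[k] Taft k n q ⊗[k] KAlg k n q d m ξ,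
      -- values on the generators
      lam (KH k n q d m ξ) = (TaftG k n q ^ m) ⊗ₜ[k] KH k n q d m ξ ∧
      lam (KW k n q d m ξ) =
        TaftX k n q ⊗ₜ[k] 1 + TaftG k n q ⊗ₜ[k] KW k n q d m ξ ∧
      -- coassociativity of the coaction
      (LinearMap.rTensor (KAlg k n q d m ξ) Δ.toLinearMap ∘ₗ lam.toLinearMap =
        (TensorProduct.assoc k _ _ _).symm.toLinearMap ∘ₗ
          LinearMap.lTensor (Taft k n q) lam.toLinearMap ∘ₗ lam.toLinearMap) ∧
      -- counit axiom of the coaction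
      ((TensorProduct.lid k (KAlg k n q d m ξ)).toLinearMap ∘ₗ
          LinearMap.rTensor (KAlg k n q d m ξ) ε.toLinearMap ∘ₗ lam.toLinearMap =
        LinearMap.id) := by
  set lam : KAlg k n q d m ξ →ₐ[k] Taft k n q ⊗[k] KAlg k n q d m ξ := RingQuot.liftAlgHom k ⟨coactF k n q d m ξ, coactF_rel k n q d m ξ hn hq hm⟩ with hlam
  have hH : lam (KH k n q d m ξ) = (TaftG k n q ^ m) ⊗ₜ[k] KH k n q d m ξ := by
    exact (liftK_mk k n q d m ξ hn hq hm (FreeAlgebra.ι k 0)).trans (coactF_zero k n q d m ξ)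
  have hW : lam (KW k n q d m ξ) =
      TaftX k n q ⊗ₜ[k] 1 + TaftG k n q ⊗ₜ[k] KW k n q d m ξ := by
    exact (liftK_mk k n q d m ξ hn hq hm (FreeAlgebra.ι k 1)).trans (coactF_one k n q d m ξ)
  refine ⟨lam, hH, hW, ?_, ?_⟩
  · -- coassociativity
    have key : (Algebra.TensorProduct.map Δ (AlgHom.id k (KAlg k n q d m ξ))).comp lam
        = ((Algebra.TensorProduct.assoc k k k (Taft k n q) (Taft k n q)
              (KAlg k n q d m ξ)).symm.toAlgHom.comp
            ((Algebra.TensorProduct.map (AlgHom.id k (Taft k n q)) lam).comp lam)) := by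
      apply RingQuot.ringQuot_ext'
      apply FreeAlgebra.hom_ext
      funext i
      fin_cases i
      · show (Algebra.TensorProduct.map Δ (AlgHom.id k (KAlg k n q d m ξ)))
            (lam (KH k n q d m ξ)) =
          (Algebra.TensorProduct.assoc k k k (Taft k n q) (Taft k n q)
              (KAlg k n q d m ξ)).symm.toAlgHom
            ((Algebra.TensorProduct.map (AlgHom.id k (Taft k n q)) lam)
              (lam (KH k n q d m ξ)))
        rw [hH, Algebra.TensorProduct.map_tmul, Algebra.TensorProduct.map_tmul,
          map_pow, hΔg, Algebra.TensorProduct.tmul_pow, AlgHom.coe_id, id_eq, hH]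
        show _ = (Algebra.TensorProduct.assoc k k k (Taft k n q) (Taft k n q)
            (KAlg k n q d m ξ)).symm _
        rw [Algebra.TensorProduct.assoc_symm_tmul]
        simp
      · show (Algebra.TensorProduct.map Δ (AlgHom.id k (KAlg k n q d m ξ)))
            (lam (KW k n q d m ξ)) =
          (Algebra.TensorProduct.assoc k k k (Taft k n q) (Taft k n q)
              (KAlg k n q d m ξ)).symm.toAlgHom
            ((Algebra.TensorProduct.map (AlgHom.id k (Taft k n q)) lam)
              (lam (KW k n q d m ξ)))
        rw [hW, map_add, map_add, Algebra.TensorProduct.map_tmul,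
          Algebra.TensorProduct.map_tmul, Algebra.TensorProduct.map_tmul,
          Algebra.TensorProduct.map_tmul, hΔx, hΔg, AlgHom.coe_id, id_eq,
          AlgHom.coe_id, id_eq, map_one, hW]
        show _ = (Algebra.TensorProduct.assoc k k k (Taft k n q) (Taft k n q)
            (KAlg k n q d m ξ)).symm _
        rw [map_add, TensorProduct.tmul_add, map_add,
          one_def_TK, Algebra.TensorProduct.assoc_symm_tmul,
          Algebra.TensorProduct.assoc_symm_tmul, Algebra.TensorProduct.assoc_symm_tmul,
          TensorProduct.add_tmul, add_assoc]
        simp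
    have eqR : LinearMap.rTensor (KAlg k n q d m ξ) Δ.toLinearMap
        = (Algebra.TensorProduct.map Δ (AlgHom.id k (KAlg k n q d m ξ))).toLinearMap :=
      TensorProduct.ext' fun x y => rfl
    have eqL : LinearMap.lTensor (Taft k n q) lam.toLinearMap
        = (Algebra.TensorProduct.map (AlgHom.id k (Taft k n q)) lam).toLinearMap :=
      TensorProduct.ext' fun x y => rfl
    have eqA : ((TensorProduct.assoc k (Taft k n q) (Taft k n q)
          (KAlg k n q d m ξ)).symm).toLinearMap
        = ((Algebra.TensorProduct.assoc k k k (Taft k n q) (Taft k n q)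
            (KAlg k n q d m ξ)).symm.toAlgHom : _ →ₐ[k] _).toLinearMap := rfl
    rw [eqR, eqL, eqA, ← AlgHom.comp_toLinearMap, ← AlgHom.comp_toLinearMap,
      ← AlgHom.comp_toLinearMap, key]
  · -- counit
    have key2 : ((Algebra.TensorProduct.lid k (KAlg k n q d m ξ)).toAlgHom.comp
        ((Algebra.TensorProduct.map ε (AlgHom.id k (KAlg k n q d m ξ))).comp lam))
          = AlgHom.id k (KAlg k n q d m ξ) := by
      apply RingQuot.ringQuot_ext'
      apply FreeAlgebra.hom_ext
      funext i
      fin_cases i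
      · show (Algebra.TensorProduct.lid k (KAlg k n q d m ξ)).toAlgHom
            ((Algebra.TensorProduct.map ε (AlgHom.id k (KAlg k n q d m ξ)))
              (lam (KH k n q d m ξ))) = KH k n q d m ξ
        rw [hH, Algebra.TensorProduct.map_tmul, map_pow, hεg, one_pow,
          AlgHom.coe_id, id_eq]
        show (Algebra.TensorProduct.lid k (KAlg k n q d m ξ)) _ = _
        rw [Algebra.TensorProduct.lid_tmul, one_smul]
      · show (Algebra.TensorProduct.lid k (KAlg k n q d m ξ)).toAlgHom
            ((Algebra.TensorProduct.map ε (AlgHom.id k (KAlg k n q d m ξ)))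
              (lam (KW k n q d m ξ))) = KW k n q d m ξ
        rw [hW, map_add, Algebra.TensorProduct.map_tmul,
          Algebra.TensorProduct.map_tmul, hεx, hεg]
        show (Algebra.TensorProduct.lid k (KAlg k n q d m ξ)) _ = _
        simp
    have eqE : LinearMap.rTensor (KAlg k n q d m ξ) ε.toLinearMap
        = (Algebra.TensorProduct.map ε (AlgHom.id k (KAlg k n q d m ξ))).toLinearMap :=
      TensorProduct.ext' fun x y => rfl
    have eqlid : (TensorProduct.lid k (KAlg k n q d m ξ)).toLinearMap
        = ((Algebra.TensorProduct.lid k (KAlg k n q d m ξ)).toAlgHom : _ →ₐ[k] _).toLinearMap := rfl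
    rw [eqE, eqlid, ← AlgHom.comp_toLinearMap, ← AlgHom.comp_toLinearMap, key2]
    rfl

end
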